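/- Let p, q : ℝ^d → ℝ≥0 be measurable functions and let S ⊆ ℝ^d be a bounded open set on which p and q are integrable and on which q is constant. Suppose S is partitioned into two disjoint measurable subsets S₁ and S₂ with vol(S₁) = vol(S₂) = vol(S)/2 (where vol denotes Lebesgue measure) and such that p(s₁) ≥ p(s₂) for every s₁ ∈ S₁ and s₂ ∈ S₂. Then max( |∫_{S₁} (p(x) − q(x)) dx| , |∫_{S₂} (p(x) − q(x)) dx| ) ≥ (1/4) · ∫_S |p(x) − q(x)| dx. -/

import Mathlib

open MeasureTheory

theorem split_capturing
    {d : ℕ} (p q : (Fin d → ℝ) → ℝ) (hpm : Measurable p) (hqm : Measurable q)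
    (hp0 : ∀ x, 0 ≤ p x) (hq0 : ∀ x, 0 ≤ q x)
    (S : Set (Fin d → ℝ)) (hSopen : IsOpen S) (hSbdd : Bornology.IsBounded S)
    (hpint : IntegrableOn p S volume) (hqint : IntegrableOn q S volume)
    (hqconst : ∃ c : ℝ, ∀ x ∈ S, q x = c)
    (S₁ S₂ : Set (Fin d → ℝ)) (hS₁m : MeasurableSet S₁) (hS₂m : MeasurableSet S₂)
    (hdisj : Disjoint S₁ S₂) (hunion : S₁ ∪ S₂ = S)
    (hvol₁ : volume S₁ = volume S / 2) (hvol₂ : volume S₂ = volume S / 2)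
    (hord : ∀ s₁ ∈ S₁, ∀ s₂ ∈ S₂, p s₂ ≤ p s₁) :
    (1 / 4 : ℝ) * ∫ x in S, |p x - q x| ≤
      max |∫ x in S₁, (p x - q x)| |∫ x in S₂, (p x - q x)| := by
  obtain ⟨c, hc⟩ := hqconst
  have hS₁S : S₁ ⊆ S := hunion ▸ Set.subset_union_left
  have hS₂S : S₂ ⊆ S := hunion ▸ Set.subset_union_right
  have hSfin : volume S < ⊤ := hSbdd.measure_lt_top
  -- rewrite the q-integrals with the constant c
  have e1 : ∫ x in S₁, (p x - q x) = ∫ x in S₁, (p x - c) :=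
    setIntegral_congr_fun hS₁m (fun x hx => by rw [hc x (hS₁S hx)])
  have e2 : ∫ x in S₂, (p x - q x) = ∫ x in S₂, (p x - c) :=
    setIntegral_congr_fun hS₂m (fun x hx => by rw [hc x (hS₂S hx)])
  have e0 : ∫ x in S, |p x - q x| = ∫ x in S, |p x - c| :=
    setIntegral_congr_fun hSopen.measurableSet (fun x hx => by rw [hc x hx])
  rw [e0, e1, e2]
  set f : (Fin d → ℝ) → ℝ := fun x => p x - c with hf
  -- degenerate case : measure zero
  by_cases hz : volume S = 0
  · have z1 : volume S₁ = 0 := le_antisymm (hz ▸ measure_mono hS₁S) zero_le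
    have z2 : volume S₂ = 0 := le_antisymm (hz ▸ measure_mono hS₂S) zero_le
    have i0 : ∫ x in S, |f x| = 0 := by
      rw [Measure.restrict_eq_zero.mpr hz]; exact integral_zero_measure _
    have i1 : ∫ x in S₁, f x = 0 := by
      rw [Measure.restrict_eq_zero.mpr z1]; exact integral_zero_measure _
    have i2 : ∫ x in S₂, f x = 0 := by
      rw [Measure.restrict_eq_zero.mpr z2]; exact integral_zero_measure _
    rw [i0, i1, i2]; simp
  -- nonempty sets
  have hn1 : S₁.Nonempty := by
    rcases Set.eq_empty_or_nonempty S₁ with h | h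
    · exfalso; apply hz
      have : volume S / 2 = 0 := by rw [← hvol₁, h]; simp
      have := ENNReal.div_eq_zero_iff.mp this
      rcases this with h' | h'
      · exact h'
      · exact absurd h' (by norm_num)
    · exact h
  have hn2 : S₂.Nonempty := by
    rcases Set.eq_empty_or_nonempty S₂ with h | h
    · exfalso; apply hz
      have : volume S / 2 = 0 := by rw [← hvol₂, h]; simp
      have := ENNReal.div_eq_zero_iff.mp this
      rcases this with h' | h'
      · exact h'
      · exact absurd h' (by norm_num)
    · exact h
  -- integrability
  have hconst : ∀ (T : Set (Fin d → ℝ)) (a : ℝ), T ⊆ S → IntegrableOn (fun _ => a) T volume := by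
    intro T a hT
    exact integrableOn_const (lt_of_le_of_lt (measure_mono hT) hSfin).ne
  have hfiS : IntegrableOn f S volume := hpint.sub (hconst S c Set.Subset.rfl)
  have hfi1 : IntegrableOn f S₁ volume := hfiS.mono_set hS₁S
  have hfi2 : IntegrableOn f S₂ volume := hfiS.mono_set hS₂S
  have hfa1 : IntegrableOn (fun x => |f x|) S₁ volume := hfi1.abs
  have hfa2 : IntegrableOn (fun x => |f x|) S₂ volume := hfi2.abs
  have hsplit : ∫ x in S, |f x| = (∫ x in S₁, |f x|) + ∫ x in S₂, |f x| := by
    rw [← hunion]; exact setIntegral_union hdisj hS₂m hfa1 hfa2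
  have hμ12 : (volume S₁).toReal = (volume S₂).toReal := by rw [hvol₁, hvol₂]
  set A := ∫ x in S₁, f x with hA
  set B := ∫ x in S₂, f x with hB
  have habsA : A ≤ |A| := le_abs_self A
  have habsB : -B ≤ |B| := neg_le_abs B
  have habsA' : -A ≤ |A| := neg_le_abs A
  have habsB' : B ≤ |B| := le_abs_self B
  have hmaxA : |A| ≤ max |A| |B| := le_max_left _ _
  have hmaxB : |B| ≤ max |A| |B| := le_max_right _ _
  by_cases hcase : ∀ s₁ ∈ S₁, c ≤ p s₁
  · -- Case A : p ≥ c on S₁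
    set m : ℝ := sInf (p '' S₁) with hm
    have hbdd : BddBelow (p '' S₁) := ⟨0, fun b ⟨x, _, hx⟩ => hx ▸ hp0 x⟩
    have hne : (p '' S₁).Nonempty := hn1.image p
    have hmc : c ≤ m := le_csInf hne (fun b ⟨x, hx, hbx⟩ => hbx ▸ hcase x hx)
    have hm_le : ∀ x ∈ S₁, m ≤ p x := fun x hx => csInf_le hbdd ⟨x, hx, rfl⟩
    have hm_ge : ∀ x ∈ S₂, p x ≤ m := fun x hx =>
      le_csInf hne (fun b ⟨y, hy, hby⟩ => hby ▸ hord y hy x hx)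
    -- A is the full abs integral on S₁
    have hA_abs : ∫ x in S₁, |f x| = A := by
      rw [hA]
      exact setIntegral_congr_fun hS₁m (fun x hx => abs_of_nonneg (by
        have := hcase x hx; simp only [hf]; linarith))
    -- bound the positive part on S₂
    have hpos_int : IntegrableOn (fun x => max (f x) 0) S₂ volume := hfi2.pos_part
    have hstep1 : ∫ x in S₂, max (f x) 0 ≤ (m - c) * (volume S₂).toReal := by
      have := setIntegral_mono_on hpos_int (hconst S₂ (m - c) hS₂S) hS₂m
        (fun x hx => max_le (by have := hm_ge x hx; simp only [hf]; linarith) (by linarith))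
      rwa [setIntegral_const, smul_eq_mul, mul_comm] at this
    have hstep2 : (m - c) * (volume S₁).toReal ≤ A := by
      have := setIntegral_mono_on (hconst S₁ (m - c) hS₁S) hfi1 hS₁m
        (fun x hx => by have := hm_le x hx; simp only [hf]; linarith)
      rwa [setIntegral_const, smul_eq_mul, mul_comm] at this
    have hS2abs : ∫ x in S₂, |f x| = 2 * (∫ x in S₂, max (f x) 0) - B := by
      have : ∫ x in S₂, |f x| = ∫ x in S₂, (2 * max (f x) 0 - f x) := by
        refine setIntegral_congr_fun hS₂m (fun x _ => ?_)
        rcases le_total 0 (f x) with h | h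
        · rw [abs_of_nonneg h, max_eq_left h]; ring
        · rw [abs_of_nonpos h, max_eq_right h]; ring
      rw [this, integral_sub ((hpos_int.const_mul 2)) hfi2, integral_const_mul]
    have key : ∫ x in S, |f x| ≤ 3 * A - B := by
      rw [hsplit, hA_abs, hS2abs]
      have : (m - c) * (volume S₂).toReal ≤ A :=
        le_trans (le_of_eq (by rw [hμ12])) hstep2
      have h2 := hstep1.trans this
      linarith
    calc (1 / 4 : ℝ) * ∫ x in S, |f x| ≤ (1 / 4) * (3 * A - B) := by
          have h4 : (0:ℝ) < 1/4 := by norm_num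
          exact mul_le_mul_of_nonneg_left key (by norm_num)
      _ ≤ (1 / 4) * (3 * |A| + |B|) := by nlinarith
      _ ≤ max |A| |B| := by
          have := hmaxA; have := hmaxB; linarith
  · -- Case B : p ≤ c on S₂
    push_neg at hcase
    obtain ⟨s₀, hs₀, hs₀c⟩ := hcase
    have hS₂le : ∀ x ∈ S₂, p x ≤ c := fun x hx => (hord s₀ hs₀ x hx).trans hs₀c.le
    set m : ℝ := sSup (p '' S₂) with hm
    have hbdd : BddAbove (p '' S₂) := ⟨p s₀, fun b ⟨x, hx, hbx⟩ => hbx ▸ hord s₀ hs₀ x hx⟩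
    have hne : (p '' S₂).Nonempty := hn2.image p
    have hmc : m ≤ c := csSup_le hne (fun b ⟨x, hx, hbx⟩ => hbx ▸ hS₂le x hx)
    have hm_ge : ∀ x ∈ S₂, p x ≤ m := fun x hx => le_csSup hbdd ⟨x, hx, rfl⟩
    have hm_le : ∀ x ∈ S₁, m ≤ p x := fun x hx =>
      csSup_le hne (fun b ⟨y, hy, hby⟩ => hby ▸ hord x hx y hy)
    -- -B is the full abs integral on S₂
    have hB_abs : ∫ x in S₂, |f x| = -B := by
      rw [hB, ← integral_neg]
      exact setIntegral_congr_fun hS₂m (fun x hx => by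
        have := hS₂le x hx
        simp only [hf]
        rw [abs_of_nonpos (by linarith)])
    -- bound the negative part on S₁
    have hneg_int : IntegrableOn (fun x => max (-(f x)) 0) S₁ volume := hfi1.neg.pos_part
    have hstep1 : ∫ x in S₁, max (-(f x)) 0 ≤ (c - m) * (volume S₁).toReal := by
      have := setIntegral_mono_on hneg_int (hconst S₁ (c - m) hS₁S) hS₁m
        (fun x hx => max_le (by have := hm_le x hx; simp only [hf]; linarith) (by linarith))
      rwa [setIntegral_const, smul_eq_mul, mul_comm] at this
    have hnegint2 : IntegrableOn (fun x => -(f x)) S₂ volume := hfi2.neg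
    have hstep2 : (c - m) * (volume S₂).toReal ≤ -B := by
      have h := setIntegral_mono_on (hconst S₂ (c - m) hS₂S) hnegint2 hS₂m
        (fun x hx => by have := hm_ge x hx; simp only [hf]; linarith)
      rw [setIntegral_const, smul_eq_mul, mul_comm, integral_neg] at h
      exact h
    have hS1abs : ∫ x in S₁, |f x| = 2 * (∫ x in S₁, max (-(f x)) 0) + A := by
      have : ∫ x in S₁, |f x| = ∫ x in S₁, (2 * max (-(f x)) 0 + f x) := by
        refine setIntegral_congr_fun hS₁m (fun x _ => ?_)
        rcases le_total 0 (f x) with h | h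
        · rw [abs_of_nonneg h, max_eq_right (by linarith)]; ring
        · rw [abs_of_nonpos h, max_eq_left (by linarith)]; ring
      rw [this, integral_add ((hneg_int.const_mul 2)) hfi1, integral_const_mul]
    have key : ∫ x in S, |f x| ≤ A - 3 * B := by
      rw [hsplit, hB_abs, hS1abs]
      have : (c - m) * (volume S₁).toReal ≤ -B :=
        le_trans (le_of_eq (by rw [hμ12])) hstep2
      have h2 := hstep1.trans this
      linarith
    calc (1 / 4 : ℝ) * ∫ x in S, |f x| ≤ (1 / 4) * (A - 3 * B) :=
          mul_le_mul_of_nonneg_left key (by norm_num)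
      _ ≤ (1 / 4) * (|A| + 3 * |B|) := by nlinarith
      _ ≤ max |A| |B| := by
          have := hmaxA; have := hmaxB; linarith
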